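/- Let F be a finite field of odd cardinality q with quadratic character χ. For distinct m₁, m₂ ∈ F and any shift (u,v), the cross-correlation ∑_{x,y} S_{m₁}(x,y)·S_{m₂}(x+u,y+v) equals q·χ(x₀)·χ(x₀+u) - ∑_{x} χ(x)·χ(x+u), where x₀ ∈ F is the unique solution of (m₂−m₁)·x₀ + m₂·u + v = 0. -/

import Mathlib

open Finset

lemma qc_shift_sum {F : Type*} [Field F] [Fintype F] [DecidableEq F]
    (hF : ringChar F ≠ 2) (c : F) (hc : c ≠ 0) :
    ∑ t : F, (quadraticChar F t : ℤ) * quadraticChar F (t + c) = -1 := by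
  have h1 : ∑ t : F, (quadraticChar F t : ℤ) * quadraticChar F (t + c)
      = ∑ t ∈ univ \ {(0:F)}, (quadraticChar F t : ℤ) * quadraticChar F (t + c) := by
    rw [Finset.sum_sdiff_eq_sub (subset_univ _), Finset.sum_singleton]
    simp
  have h2 : ∀ t ∈ univ \ {(0:F)}, (quadraticChar F t : ℤ) * quadraticChar F (t + c)
      = quadraticChar F (1 + c * t⁻¹) := by
    intro t ht
    simp only [mem_sdiff, mem_singleton] at ht
    have ht0 : t ≠ 0 := ht.2
    have : t + c = t * (1 + c * t⁻¹) := by field_simp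
    rw [this, map_mul, ← mul_assoc, ← map_mul]
    rw [show t * t = t ^ 2 by ring, quadraticChar_sq_one' ht0]
    push_cast
    rw [one_mul]
  rw [h1, Finset.sum_congr rfl h2]
  have h3 : ∑ t ∈ univ \ {(0:F)}, (quadraticChar F (1 + c * t⁻¹) : ℤ)
      = ∑ s ∈ univ \ {(1:F)}, (quadraticChar F s : ℤ) := by
    apply Finset.sum_nbij' (fun t => 1 + c * t⁻¹) (fun s => c * (s - 1)⁻¹)
    · intro t ht
      simp only [mem_sdiff, mem_univ, mem_singleton, true_and] at ht ⊢
      intro h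
      have : c * t⁻¹ = 0 := by linear_combination h
      rcases mul_eq_zero.1 this with h' | h'
      · exact hc h'
      · exact ht (inv_eq_zero.1 h' ▸ rfl)
    · intro s hs
      simp only [mem_sdiff, mem_univ, mem_singleton, true_and] at hs ⊢
      intro h
      rcases mul_eq_zero.1 h with h' | h'
      · exact hc h'
      · exact hs (by have := inv_eq_zero.1 h'; linear_combination this)
    · intro t ht
      simp only [mem_sdiff, mem_univ, mem_singleton, true_and] at ht
      field_simp
      simp [hc]
    · intro s hs
      simp only [mem_sdiff, mem_univ, mem_singleton, true_and] at hs
      have h1 : s - 1 ≠ 0 := sub_ne_zero.2 hs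
      field_simp
      ring
    · intro t ht; rfl
  rw [h3, Finset.sum_sdiff_eq_sub (subset_univ _), Finset.sum_singleton]
  have := quadraticChar_sum_zero hF
  have hcast : ∑ s : F, (quadraticChar F s : ℤ) = 0 := by exact_mod_cast this
  rw [hcast, map_one]
  norm_num

lemma qc_sq_sum {F : Type*} [Field F] [Fintype F] [DecidableEq F]
    (hF : ringChar F ≠ 2) :
    ∑ t : F, (quadraticChar F t : ℤ) * quadraticChar F t = (Fintype.card F : ℤ) - 1 := by
  have : ∀ t : F, (quadraticChar F t : ℤ) * quadraticChar F t
      = if t = 0 then 0 else 1 := by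
    intro t
    by_cases h : t = 0
    · simp [h]
    · rw [if_neg h, ← map_mul, show t * t = t ^ 2 by ring, quadraticChar_sq_one' h]
  rw [Finset.sum_congr rfl fun t _ => this t]
  have h4 : ∀ t : F, (if t = 0 then (0:ℤ) else 1) = 1 - (if t = 0 then 1 else 0) := by
    intro t; split <;> simp
  rw [Finset.sum_congr rfl fun t _ => h4 t]
  rw [Finset.sum_sub_distrib, Finset.sum_ite_eq' univ (0:F) (fun _ => (1:ℤ))]
  simp [Finset.card_univ]

theorem crosscorrelation_formula
    (F : Type*) [Field F] [Fintype F] [DecidableEq F]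
    (hodd : Odd (Fintype.card F))
    (χ : F → ℤ) (hχ : ∀ x, χ x = quadraticChar F x)
    (S : F → F × F → ℤ) (hS : ∀ m x y, S m (x, y) = χ x * χ (m * x + y))
    (m₁ m₂ : F) (hm : m₁ ≠ m₂) (u v : F)
    (x₀ : F) (hx₀ : (m₂ - m₁) * x₀ + m₂ * u + v = 0) :
    ∑ x : F, ∑ y : F, S m₁ (x, y) * S m₂ (x + u, y + v) =
      (Fintype.card F : ℤ) * χ x₀ * χ (x₀ + u) - ∑ x : F, χ x * χ (x + u) := by
  have hF : ringChar F ≠ 2 := by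
    intro h
    have := (FiniteField.even_card_iff_char_two (F := F)).1 h
    rw [Nat.odd_iff] at hodd
    omega
  -- inner sum computation
  have key : ∀ x : F, ∑ y : F, S m₁ (x, y) * S m₂ (x + u, y + v)
      = χ x * χ (x + u) * (if x = x₀ then (Fintype.card F : ℤ) - 1 else -1) := by
    intro x
    have hc : ∀ y : F, m₂ * (x + u) + (y + v) = (m₁ * x + y) + (m₂ - m₁) * (x - x₀) := by
      intro y; linear_combination hx₀
    have step1 : ∑ y : F, S m₁ (x, y) * S m₂ (x + u, y + v)
        = χ x * χ (x + u) * ∑ y : F, χ (m₁ * x + y) * χ ((m₁ * x + y) + (m₂ - m₁) * (x - x₀)) := by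
      rw [Finset.mul_sum]
      apply Finset.sum_congr rfl
      intro y _
      rw [hS, hS, hc y]; ring
    rw [step1]
    congr 1
    have step2 : ∑ y : F, χ (m₁ * x + y) * χ ((m₁ * x + y) + (m₂ - m₁) * (x - x₀))
        = ∑ t : F, χ t * χ (t + (m₂ - m₁) * (x - x₀)) := by
      exact Fintype.sum_equiv (Equiv.addLeft (m₁ * x)) _ _ (fun y => rfl)
    rw [step2]
    by_cases hx : x = x₀
    · subst hx
      simp only [sub_self, mul_zero, add_zero, if_pos rfl]
      simp only [hχ]
      exact qc_sq_sum hF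
    · rw [if_neg hx]
      have hne : (m₂ - m₁) * (x - x₀) ≠ 0 :=
        mul_ne_zero (sub_ne_zero.2 (Ne.symm hm)) (sub_ne_zero.2 hx)
      simp only [hχ]
      exact qc_shift_sum hF _ hne
  rw [Finset.sum_congr rfl fun x _ => key x]
  have split : ∀ x : F, χ x * χ (x + u) * (if x = x₀ then (Fintype.card F : ℤ) - 1 else -1)
      = (if x = x₀ then (Fintype.card F : ℤ) * χ x₀ * χ (x₀ + u) else 0) - χ x * χ (x + u) := by
    intro x
    by_cases h : x = x₀ <;> simp [h] <;> ring
  rw [Finset.sum_congr rfl fun x _ => split x, Finset.sum_sub_distrib,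
    Finset.sum_ite_eq' univ x₀]
  simp
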